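/- arXiv:1610.09188 — 5 statements merged into one kernel-verified Lean document; each statement's English description precedes it below -/
import Mathlib

section
/- Let λ < 1 and suppose the Markov operator A_π^μ satisfies ‖A_π^μ v‖ ≤ λ‖v‖ for all v ∈ E, where supp μ ⊆ S. Then there exists a continuous linear map P : Z¹(G,π) → Z¹(G,π) (with respect to the norm ‖·‖_S) such that P ∘ P = P, the range of P equals B¹(G,π), and P z = z for every z ∈ B¹(G,π). In particular B¹(G,π) is a closed complemented subspace of Z¹(G,π), and Z¹(G,π) is the direct sum of B¹(G,π) and the kernel of P. -/
open MeasureTheory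

/-- `z : G → E` is a (continuous) 1-cocycle for the representation `π`. -/
def IsCocycle {G E : Type*} [Group G] [TopologicalSpace G]
    [NormedAddCommGroup E] [NormedSpace ℝ E]
    (π : G → E →L[ℝ] E) (z : G → E) : Prop :=
  Continuous z ∧ ∀ g h : G, z (g * h) = z g + (π g) (z h)

/-- The coboundary `d_π v : G → E`, `(d_π v)(g) = v − π_g v`. -/
def coboundary {G E : Type*} [NormedAddCommGroup E] [NormedSpace ℝ E]
    (π : G → E →L[ℝ] E) (v : E) : G → E :=
  fun g => v - (π g) v

/-- The norm `‖z‖_S = sup_{s ∈ S} ‖z_s‖`. -/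
noncomputable def normS {G E : Type*} [NormedAddCommGroup E]
    (S : Set G) (z : G → E) : ℝ :=
  ⨆ s : S, ‖z (s : G)‖

section Aux

variable {G E : Type*} [Group G] [TopologicalSpace G]
  [NormedAddCommGroup E] [NormedSpace ℝ E]

lemma aux_cocycle_one {π : G → E →L[ℝ] E}
    (hπ_one : π 1 = ContinuousLinearMap.id ℝ E) {z : G → E}
    (hz : IsCocycle π z) : z 1 = 0 := by
  have h := hz.2 1 1
  rw [one_mul, hπ_one] at h
  exact left_eq_add.mp h

lemma aux_cocycle_inv {π : G → E →L[ℝ] E}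
    (hπ_one : π 1 = ContinuousLinearMap.id ℝ E) {z : G → E}
    (hz : IsCocycle π z) (g : G) : z g⁻¹ = -(π g⁻¹) (z g) := by
  have h := hz.2 g⁻¹ g
  rw [inv_mul_cancel, aux_cocycle_one hπ_one hz] at h
  exact eq_neg_of_add_eq_zero_left h.symm

/-- Two cocycles agreeing on a generating set agree everywhere. -/
lemma aux_cocycle_eq_of_eqOn {π : G → E →L[ℝ] E}
    (hπ_one : π 1 = ContinuousLinearMap.id ℝ E) {z w : G → E}
    (hz : IsCocycle π z) (hw : IsCocycle π w)
    {S : Set G} (hgen : Subgroup.closure S = ⊤)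
    (hSeq : ∀ s ∈ S, z s = w s) : z = w := by
  funext g
  have hg : g ∈ Subgroup.closure S := by rw [hgen]; exact Subgroup.mem_top g
  induction hg using Subgroup.closure_induction with
  | mem x hx => exact hSeq x hx
  | one => rw [aux_cocycle_one hπ_one hz, aux_cocycle_one hπ_one hw]
  | mul x y hx hy ihx ihy => rw [hz.2, hw.2, ihx, ihy]
  | inv x hx ih => rw [aux_cocycle_inv hπ_one hz, aux_cocycle_inv hπ_one hw, ih]

lemma aux_coboundary_cocycle {π : G → E →L[ℝ] E}
    (hπ_mul : ∀ g h : G, π (g * h) = (π g).comp (π h))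
    (hπ_cont : ∀ v : E, Continuous fun g => (π g) v) (v : E) :
    IsCocycle π (coboundary π v) := by
  refine ⟨continuous_const.sub (hπ_cont v), fun g h => ?_⟩
  simp only [coboundary, hπ_mul, ContinuousLinearMap.comp_apply, _root_.map_sub]
  abel

lemma aux_cocycle_sub {π : G → E →L[ℝ] E} {z w : G → E}
    (hz : IsCocycle π z) (hw : IsCocycle π w) : IsCocycle π (z - w) := by
  refine ⟨hz.1.sub hw.1, fun g h => ?_⟩
  simp only [Pi.sub_apply, hz.2, hw.2, map_sub]
  abel

lemma aux_coboundary_add {π : G → E →L[ℝ] E} (v w : E) :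
    coboundary π (v + w) = coboundary π v + coboundary π w := by
  funext g; simp only [coboundary, map_add, Pi.add_apply]; abel

lemma aux_coboundary_sub {π : G → E →L[ℝ] E} (v w : E) :
    coboundary π (v - w) = coboundary π v - coboundary π w := by
  funext g; simp only [coboundary, map_sub, Pi.sub_apply]; abel

lemma aux_coboundary_smul {π : G → E →L[ℝ] E} (c : ℝ) (v : E) :
    coboundary π (c • v) = c • coboundary π v := by
  funext g; simp only [coboundary, ContinuousLinearMap.map_smul, Pi.smul_apply, smul_sub]

end Aux

/-- there exists a bounded (w.r.t. `‖·‖_S`) linear projection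
`P : Z¹(G,π) → Z¹(G,π)` whose range is `B¹(G,π)` and which is the identity on `B¹(G,π)`;
in particular `B¹(G,π)` is closed and complemented in `Z¹(G,π)`, with
`Z¹(G,π) = B¹(G,π) ⊕ ker P`. -/
theorem stmt_0 {G E : Type*} [Group G] [TopologicalSpace G] [IsTopologicalGroup G]
    [MeasurableSpace G] [BorelSpace G]
    [NormedAddCommGroup E] [NormedSpace ℝ E] [CompleteSpace E]
    (π : G → E →L[ℝ] E)
    (hπ_mul : ∀ g h : G, π (g * h) = (π g).comp (π h))
    (hπ_one : π 1 = ContinuousLinearMap.id ℝ E)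
    (hπ_isom : ∀ (g : G) (v : E), ‖(π g) v‖ = ‖v‖)
    (hπ_cont : ∀ v : E, Continuous fun g => (π g) v)
    (S : Set G) (hS_comp : IsCompact S) (hS_symm : ∀ s ∈ S, s⁻¹ ∈ S)
    (hS_gen : Subgroup.closure S = ⊤)
    (μ : Measure G) [IsProbabilityMeasure μ]
    (hμK : ∃ K : Set G, IsCompact K ∧ μ Kᶜ = 0)
    (hμS : μ Sᶜ = 0)
    (lam : ℝ) (hlam : lam < 1)
    (hcontr : ∀ v : E, ‖∫ g, (π g) v ∂μ‖ ≤ lam * ‖v‖) :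
    ∃ P : (G → E) → (G → E),
      -- `P` maps cocycles to cocycles
      (∀ z, IsCocycle π z → IsCocycle π (P z)) ∧
      -- `P` is linear on `Z¹(G,π)`
      (∀ z z', IsCocycle π z → IsCocycle π z' → P (z + z') = P z + P z') ∧
      (∀ (c : ℝ) (z), IsCocycle π z → P (c • z) = c • P z) ∧
      -- `P` is bounded (hence continuous) w.r.t. `‖·‖_S`
      (∃ C : ℝ, ∀ z, IsCocycle π z → normS S (P z) ≤ C * normS S z) ∧
      -- `P` is idempotent
      (∀ z, IsCocycle π z → P (P z) = P z) ∧
      -- the range of `P` is contained in `B¹(G,π)` ...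
      (∀ z, IsCocycle π z → ∃ v : E, P z = coboundary π v) ∧
      -- ... and `P` is the identity on `B¹(G,π)` (so the range equals `B¹(G,π)`)
      (∀ v : E, P (coboundary π v) = coboundary π v) ∧
      -- `B¹(G,π)` is closed in `(Z¹(G,π), ‖·‖_S)`
      (∀ z, IsCocycle π z →
        (∀ ε > (0 : ℝ), ∃ v : E, normS S (z - coboundary π v) < ε) →
        ∃ v : E, z = coboundary π v) ∧
      -- `Z¹(G,π)` is the direct sum of `B¹(G,π)` and `ker P`
      (∀ z, IsCocycle π z →
        ∃! p : E × (G → E),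
          IsCocycle π p.2 ∧ P p.2 = 0 ∧ z = coboundary π p.1 + p.2) := by
  classical
  -- normalize the contraction constant
  set lam' : ℝ := max lam 0 with hlam'def
  have hlam'0 : 0 ≤ lam' := le_max_right _ _
  have hlam'1 : lam' < 1 := max_lt hlam one_pos
  have hcontr' : ∀ v : E, ‖∫ g, (π g) v ∂μ‖ ≤ lam' * ‖v‖ := fun v =>
    (hcontr v).trans (mul_le_mul_of_nonneg_right (le_max_left _ _) (norm_nonneg v))
  -- basic integrability
  have haeS : ∀ᵐ g ∂μ, g ∈ S := by
    rw [ae_iff]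
    simpa [Set.compl_def] using hμS
  have haesm : ∀ f : G → E, Continuous f → AEStronglyMeasurable f μ := by
    intro f hf
    borelize E
    rw [aestronglyMeasurable_iff_aemeasurable_separable]
    refine ⟨hf.measurable.aemeasurable, f '' S, (hS_comp.image hf).isSeparable, ?_⟩
    filter_upwards [haeS] with g hg using Set.mem_image_of_mem f hg
  have hintπ : ∀ v : E, Integrable (fun g => (π g) v) μ := by
    intro v
    refine ⟨haesm _ (hπ_cont v), ?_⟩
    refine (hasFiniteIntegral_const ‖v‖).mono' ?_
    filter_upwards with g
    rw [hπ_isom g v]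
  have hSne : S.Nonempty := by
    rcases Set.eq_empty_or_nonempty S with h | h
    · exfalso
      have : μ Sᶜ = 1 := by rw [h, Set.compl_empty, measure_univ]
      rw [hμS] at this; exact zero_ne_one this
    · exact h
  haveI : Nonempty S := hSne.to_subtype
  have hintz : ∀ z : G → E, Continuous z → Integrable z μ := by
    intro z hz
    obtain ⟨M, hM⟩ := hS_comp.exists_bound_of_continuousOn hz.continuousOn
    refine ⟨haesm _ hz, ?_⟩
    refine (hasFiniteIntegral_const M).mono' ?_
    filter_upwards [haeS] with g hg
    exact hM g hg
  -- the Markov operator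
  let Alin : E →ₗ[ℝ] E :=
    { toFun := fun v => ∫ g, (π g) v ∂μ
      map_add' := fun v w => by
        simp only [map_add]
        exact integral_add (hintπ v) (hintπ w)
      map_smul' := fun c v => by
        simp only [ContinuousLinearMap.map_smul, RingHom.id_apply]
        exact integral_smul c _ }
  let A : E →L[ℝ] E := Alin.mkContinuous lam' hcontr'
  have hAapp : ∀ v : E, A v = ∫ g, (π g) v ∂μ := fun v => rfl
  have hAnorm : ‖A‖ ≤ lam' := Alin.mkContinuous_norm_le hlam'0 _
  have hAlt : ‖A‖ < 1 := lt_of_le_of_lt hAnorm hlam'1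
  let u : (E →L[ℝ] E)ˣ := Units.oneSub A hAlt
  let B : E →L[ℝ] E := ↑u⁻¹
  have hBu : ∀ v : E, B (v - A v) = v := by
    intro v
    have h1 : (u : E →L[ℝ] E) v = v - A v := by
      show ((1 : E →L[ℝ] E) - A) v = v - A v
      simp [ContinuousLinearMap.sub_apply]
    have h2 : B ((u : E →L[ℝ] E) v) = ((↑u⁻¹ * ↑u : E →L[ℝ] E)) v := rfl
    rw [← h1, h2, u.inv_mul, ContinuousLinearMap.one_apply]
  -- the projection
  set P : (G → E) → (G → E) := fun z => coboundary π (B (∫ g, z g ∂μ)) with hPdef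
  -- `P` is the identity on coboundaries
  have hPid : ∀ v : E, P (coboundary π v) = coboundary π v := by
    intro v
    have h1 : (∫ g, coboundary π v g ∂μ) = v - A v := by
      have : (∫ g, coboundary π v g ∂μ) = (∫ g, (v - (π g) v) ∂μ) := rfl
      rw [this, integral_sub (integrable_const v) (hintπ v), integral_const,
        probReal_univ, one_smul, hAapp]
    rw [hPdef]
    simp only
    rw [h1, hBu]
  -- coboundaries are cocycles, hence P maps into cocycles
  have hPcocycle : ∀ z : G → E, IsCocycle π (P z) :=
    fun z => aux_coboundary_cocycle hπ_mul hπ_cont _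
  -- linearity on continuous functions
  have hPadd : ∀ z z' : G → E, Continuous z → Continuous z' →
      P (z + z') = P z + P z' := by
    intro z z' hz hz'
    rw [hPdef]
    simp only
    have : (∫ g, (z + z') g ∂μ) = (∫ g, z g ∂μ) + ∫ g, z' g ∂μ :=
      integral_add (hintz z hz) (hintz z' hz')
    rw [this, map_add, aux_coboundary_add]
  have hPsub : ∀ z z' : G → E, Continuous z → Continuous z' →
      P (z - z') = P z - P z' := by
    intro z z' hz hz'
    rw [hPdef]
    simp only
    have : (∫ g, (z - z') g ∂μ) = (∫ g, z g ∂μ) - ∫ g, z' g ∂μ :=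
      integral_sub (hintz z hz) (hintz z' hz')
    rw [this, map_sub, aux_coboundary_sub]
  have hPsmul : ∀ (c : ℝ) (z : G → E), P (c • z) = c • P z := by
    intro c z
    rw [hPdef]
    simp only
    have : (∫ g, (c • z) g ∂μ) = c • ∫ g, z g ∂μ := by
      simp only [Pi.smul_apply]
      exact integral_smul c z
    rw [this, ContinuousLinearMap.map_smul, aux_coboundary_smul]
  -- normS facts
  have hbdd : ∀ z : G → E, Continuous z → BddAbove (Set.range fun s : S => ‖z s‖) := by
    intro z hz
    have h1 : IsCompact ((fun g => ‖z g‖) '' S) :=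
      hS_comp.image_of_continuousOn (hz.norm.continuousOn)
    have h2 := h1.bddAbove
    rwa [Set.image_eq_range] at h2
  have hle_normS : ∀ (z : G → E), Continuous z → ∀ s ∈ S, ‖z s‖ ≤ normS S z := by
    intro z hz s hs
    exact le_ciSup (hbdd z hz) ⟨s, hs⟩
  have hnormS_nonneg : ∀ (z : G → E), Continuous z → 0 ≤ normS S z := by
    intro z hz
    obtain ⟨s, hs⟩ := hSne
    exact (norm_nonneg _).trans (hle_normS z hz s hs)
  have hnormS_le : ∀ (z : G → E) (M : ℝ), (∀ s ∈ S, ‖z s‖ ≤ M) → normS S z ≤ M := by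
    intro z M hM
    exact ciSup_le fun s => hM s s.2
  -- integral bound
  have hint_le : ∀ z : G → E, Continuous z → ‖∫ g, z g ∂μ‖ ≤ normS S z := by
    intro z hz
    have h : ∀ᵐ g ∂μ, ‖z g‖ ≤ normS S z := by
      filter_upwards [haeS] with g hg
      exact hle_normS z hz g hg
    calc ‖∫ g, z g ∂μ‖ ≤ normS S z * (μ Set.univ).toReal :=
          norm_integral_le_of_norm_le_const h
      _ = normS S z := by rw [measure_univ, ENNReal.toReal_one, mul_one]
  -- coboundary norm bound
  have hcob_le : ∀ v : E, normS S (coboundary π v) ≤ 2 * ‖v‖ := by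
    intro v
    refine hnormS_le _ _ fun s _ => ?_
    calc ‖v - (π s) v‖ ≤ ‖v‖ + ‖(π s) v‖ := norm_sub_le _ _
      _ = 2 * ‖v‖ := by rw [hπ_isom]; ring
  -- boundedness of P
  have hPbound : ∀ z : G → E, Continuous z → normS S (P z) ≤ (2 * ‖B‖) * normS S z := by
    intro z hz
    calc normS S (P z) ≤ 2 * ‖B (∫ g, z g ∂μ)‖ := hcob_le _
      _ ≤ 2 * (‖B‖ * ‖∫ g, z g ∂μ‖) := by
          have := B.le_opNorm (∫ g, z g ∂μ)
          linarith
      _ ≤ 2 * (‖B‖ * normS S z) := by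
          have h1 := hint_le z hz
          have h2 : (0:ℝ) ≤ ‖B‖ := norm_nonneg _
          nlinarith
      _ = (2 * ‖B‖) * normS S z := by ring
  -- z - P z has zero P (for cocycles)
  have hPidem : ∀ z : G → E, P (P z) = P z := fun z => hPid _
  -- key closedness argument
  have hclosed : ∀ z, IsCocycle π z →
      (∀ ε > (0 : ℝ), ∃ v : E, normS S (z - coboundary π v) < ε) →
      z = P z := by
    intro z hz happrox
    -- show ‖(z - P z) s‖ = 0 for s ∈ S
    have key : ∀ s ∈ S, z s = P z s := by
      intro s hs
      have hbound : ∀ ε > (0:ℝ), ‖z s - P z s‖ ≤ (1 + 2 * ‖B‖) * ε := by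
        intro ε hε
        obtain ⟨v, hv⟩ := happrox ε hε
        have hzv : P (z - coboundary π v) = P z - coboundary π v := by
          rw [hPsub z (coboundary π v) hz.1
            (aux_coboundary_cocycle hπ_mul hπ_cont v).1, hPid]
        have hdiffcoc : IsCocycle π (z - coboundary π v) :=
          aux_cocycle_sub hz (aux_coboundary_cocycle hπ_mul hπ_cont v)
        have heq : z s - P z s = (z - coboundary π v) s - P (z - coboundary π v) s := by
          rw [hzv]
          simp only [Pi.sub_apply]
          abel
        rw [heq]
        have h1 : ‖(z - coboundary π v) s‖ ≤ normS S (z - coboundary π v) :=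
          hle_normS _ hdiffcoc.1 s hs
        have h2 : ‖P (z - coboundary π v) s‖ ≤ normS S (P (z - coboundary π v)) :=
          hle_normS _ (hPcocycle _).1 s hs
        have h3 := hPbound _ hdiffcoc.1
        have h4 : (0:ℝ) ≤ ‖B‖ := norm_nonneg _
        have h5 := norm_sub_le ((z - coboundary π v) s) (P (z - coboundary π v) s)
        nlinarith [hnormS_nonneg _ hdiffcoc.1]
      have hC : (0:ℝ) < 1 + 2 * ‖B‖ := by positivity
      have : ‖z s - P z s‖ ≤ 0 := by
        by_contra hcon
        push_neg at hcon
        have hε : 0 < ‖z s - P z s‖ / (2 * (1 + 2 * ‖B‖)) := by positivity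
        have h6 := hbound _ hε
        have h7 : (1 + 2 * ‖B‖) * (‖z s - P z s‖ / (2 * (1 + 2 * ‖B‖))) =
            ‖z s - P z s‖ / 2 := by
          field_simp
        rw [h7] at h6
        linarith
      have := le_antisymm this (norm_nonneg _)
      rwa [norm_eq_zero, sub_eq_zero] at this
    exact aux_cocycle_eq_of_eqOn hπ_one hz (hPcocycle z) hS_gen key
  -- invariant vectors vanish
  have hinv_zero : ∀ v : E, (∀ g : G, (π g) v = v) → v = 0 := by
    intro v hv
    have h1 : A v = v := by
      rw [hAapp]
      have : (∫ g, (π g) v ∂μ) = ∫ _, v ∂μ := by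
        refine integral_congr_ae ?_
        filter_upwards with g
        exact hv g
      rw [this, integral_const, probReal_univ, one_smul]
    have h2 := hcontr' v
    rw [← hAapp, h1] at h2
    have : ‖v‖ ≤ 0 := by nlinarith [norm_nonneg v]
    rw [← norm_eq_zero]
    exact le_antisymm this (norm_nonneg v)
  -- coboundary injectivity
  have hcob_inj : ∀ v w : E, coboundary π v = coboundary π w → v = w := by
    intro v w h
    have hv : ∀ g : G, (π g) (v - w) = v - w := by
      intro g
      have := congrFun h g
      simp only [coboundary] at this
      rw [map_sub]
      -- v - π g v = w - π g w  ⟹  π g v - π g w = v - w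
      have : (π g) v - (π g) w = v - w := by
        have h2 := this
        abel_nf at h2 ⊢
        linear_combination (norm := abel_nf) -h2
      exact this
    have := hinv_zero (v - w) hv
    exact sub_eq_zero.mp this
  refine ⟨P, fun z _ => hPcocycle z, ?_, ?_, ?_, ?_, ?_, hPid, ?_, ?_⟩
  · -- additivity
    intro z z' hz hz'
    exact hPadd z z' hz.1 hz'.1
  · -- smul
    intro c z _
    exact hPsmul c z
  · -- boundedness
    exact ⟨2 * ‖B‖, fun z hz => hPbound z hz.1⟩
  · -- idempotent
    intro z _
    exact hPidem z
  · -- range in coboundaries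
    intro z _
    exact ⟨B (∫ g, z g ∂μ), rfl⟩
  · -- closedness
    intro z hz happrox
    exact ⟨B (∫ g, z g ∂μ), hclosed z hz happrox⟩
  · -- direct sum decomposition
    intro z hz
    refine ⟨⟨B (∫ g, z g ∂μ), z - P z⟩, ⟨?_, ?_, ?_⟩, ?_⟩
    · exact aux_cocycle_sub hz (hPcocycle z)
    · show P (z - P z) = 0
      rw [hPsub z (P z) hz.1 (hPcocycle z).1, hPidem, sub_self]
    · show z = coboundary π (B (∫ g, z g ∂μ)) + (z - P z)
      have : coboundary π (B (∫ g, z g ∂μ)) = P z := rfl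
      rw [this]
      abel
    · rintro ⟨v, y⟩ ⟨hy_coc, hPy, hzeq⟩
      simp only at hy_coc hPy hzeq
      have hPz : P z = coboundary π v := by
        rw [hzeq, hPadd _ _ (aux_coboundary_cocycle hπ_mul hπ_cont v).1 hy_coc.1,
          hPid, hPy, add_zero]
      have hveq : v = B (∫ g, z g ∂μ) := by
        apply hcob_inj
        rw [← hPz]
      have hyeq : y = z - P z := by
        rw [hPz, hzeq]
        abel
      rw [Prod.mk.injEq]
      exact ⟨hveq, hyeq⟩
end

section
/- Suppose ‖A_π^μ v‖ ≤ λ‖v‖ for all v ∈ E with λ < 1, and suppose supp μ ⊆ S. Define P : Z¹(G,π) → Z¹(G,π) by P z = d_π b(z), where b(z) is the unique fixed point of L_{π,z}^μ. Then P is continuous with respect to the norm ‖·‖_S; more precisely, ‖P z‖_S ≤ 2 ‖z‖_S / (1 − λ) for every 1-cocycle z. -/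
open MeasureTheory

/-- the projection `P z = d_π b(z)` is continuous: `‖P z‖_S ≤ 2‖z‖_S/(1−λ)`. -/
theorem stmt_9 {G E : Type*} [Group G] [TopologicalSpace G] [IsTopologicalGroup G]
    [MeasurableSpace G] [BorelSpace G]
    [NormedAddCommGroup E] [NormedSpace ℝ E] [CompleteSpace E]
    (π : G → E →L[ℝ] E)
    (hπ_mul : ∀ g h : G, π (g * h) = (π g).comp (π h))
    (hπ_one : π 1 = ContinuousLinearMap.id ℝ E)
    (hπ_isom : ∀ (g : G) (v : E), ‖(π g) v‖ = ‖v‖)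
    (hπ_cont : ∀ v : E, Continuous fun g => (π g) v)
    (S : Set G) (hS_comp : IsCompact S) (hS_symm : ∀ s ∈ S, s⁻¹ ∈ S)
    (hS_gen : Subgroup.closure S = ⊤)
    (μ : Measure G) [IsProbabilityMeasure μ]
    (hμK : ∃ K : Set G, IsCompact K ∧ μ Kᶜ = 0)
    (hμS : μ Sᶜ = 0)
    (lam : ℝ) (hlam : lam < 1)
    (hcontr : ∀ v : E, ‖∫ g, (π g) v ∂μ‖ ≤ lam * ‖v‖) :
    ∀ z : G → E, IsCocycle π z →
      ∀ b : E, b = (∫ g, (π g) b ∂μ) + ∫ g, z g ∂μ →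
        normS S (coboundary π b) ≤ 2 * normS S z / (1 - lam) := by
  intro z hz b hb
  have h1 : (0:ℝ) < 1 - lam := by linarith
  have hNz : 0 ≤ normS S z := Real.iSup_nonneg fun s => norm_nonneg _
  have hbdd : BddAbove (Set.range fun s : S => ‖z (s : G)‖) := by
    have := (hS_comp.image_of_continuousOn
      ((continuous_norm.comp hz.1).continuousOn)).bddAbove
    rwa [Set.image_eq_range] at this
  have hzS : ∀ g ∈ S, ‖z g‖ ≤ normS S z := fun g hg => le_ciSup hbdd ⟨g, hg⟩
  have hae : ∀ᵐ g ∂μ, ‖z g‖ ≤ normS S z := by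
    have hmem : ∀ᵐ g ∂μ, g ∈ S := by
      rw [ae_iff]; exact hμS
    filter_upwards [hmem] with g hg using hzS g hg
  have hzμ : ‖∫ g, z g ∂μ‖ ≤ normS S z := by
    have := norm_integral_le_of_norm_le_const hae
    simpa using this
  have hbnorm : ‖b‖ ≤ normS S z / (1 - lam) := by
    have h2 : ‖b‖ ≤ lam * ‖b‖ + normS S z := by
      calc ‖b‖ = ‖(∫ g, π g b ∂μ) + ∫ g, z g ∂μ‖ := by rw [← hb]
        _ ≤ ‖∫ g, π g b ∂μ‖ + ‖∫ g, z g ∂μ‖ := norm_add_le _ _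
        _ ≤ lam * ‖b‖ + normS S z := add_le_add (hcontr b) hzμ
    rw [le_div_iff₀ h1]; linarith
  refine Real.iSup_le (fun s => ?_) (div_nonneg (by linarith) h1.le)
  calc ‖coboundary π b (s : G)‖ ≤ ‖b‖ + ‖π (s : G) b‖ := norm_sub_le _ _
    _ = 2 * ‖b‖ := by rw [hπ_isom]; ring
    _ ≤ 2 * (normS S z / (1 - lam)) := by linarith
    _ = 2 * normS S z / (1 - lam) := by ring
end

section
/- Suppose ‖A_π^μ v‖ ≤ λ‖v‖ for all v ∈ E with λ < 1, and suppose supp μ ⊆ S. Then the codifferential is bounded below: ‖d_π v‖_S ≥ (1 − λ)‖v‖ for every v ∈ E. In particular d_π is injective and its range B¹(G,π) is a closed subspace of (Z¹(G,π), ‖·‖_S). -/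
open MeasureTheory

/-- the codifferential is bounded below, `‖d_π v‖_S ≥ (1−λ)‖v‖`; in particular
`d_π` is injective and `B¹(G,π)` is closed in `(Z¹(G,π), ‖·‖_S)`. -/
theorem stmt_10 {G E : Type*} [Group G] [TopologicalSpace G] [IsTopologicalGroup G]
    [MeasurableSpace G] [BorelSpace G]
    [NormedAddCommGroup E] [NormedSpace ℝ E] [CompleteSpace E]
    (π : G → E →L[ℝ] E)
    (hπ_mul : ∀ g h : G, π (g * h) = (π g).comp (π h))
    (hπ_one : π 1 = ContinuousLinearMap.id ℝ E)
    (hπ_isom : ∀ (g : G) (v : E), ‖(π g) v‖ = ‖v‖)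
    (hπ_cont : ∀ v : E, Continuous fun g => (π g) v)
    (S : Set G) (hS_comp : IsCompact S) (hS_symm : ∀ s ∈ S, s⁻¹ ∈ S)
    (hS_gen : Subgroup.closure S = ⊤)
    (μ : Measure G) [IsProbabilityMeasure μ]
    (hμK : ∃ K : Set G, IsCompact K ∧ μ Kᶜ = 0)
    (hμS : μ Sᶜ = 0)
    (lam : ℝ) (hlam : lam < 1)
    (hcontr : ∀ v : E, ‖∫ g, (π g) v ∂μ‖ ≤ lam * ‖v‖) :
    (∀ v : E, (1 - lam) * ‖v‖ ≤ normS S (coboundary π v)) ∧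
      (∀ v w : E, coboundary π v = coboundary π w → v = w) ∧
      (∀ z : G → E, IsCocycle π z →
        (∀ ε > (0 : ℝ), ∃ v : E, normS S (z - coboundary π v) < ε) →
        ∃ v : E, z = coboundary π v) := by
  -- S is nonempty
  have hSne : S.Nonempty := by
    rcases Set.eq_empty_or_nonempty S with h | h
    · exfalso
      have : μ Set.univ = 0 := by
        have : Sᶜ = (Set.univ : Set G) := by simp [h]
        rw [← this]; exact hμS
      simp [measure_univ] at this
    · exact h
  haveI : Nonempty S := hSne.to_subtype
  -- the coboundary family is bounded above
  have hbd : ∀ v : E, BddAbove (Set.range fun s : S => ‖coboundary π v (s : G)‖) := by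
    intro v
    refine ⟨2 * ‖v‖, ?_⟩
    rintro x ⟨s, rfl⟩
    calc ‖coboundary π v (s : G)‖ ≤ ‖v‖ + ‖(π (s : G)) v‖ := norm_sub_le _ _
      _ = 2 * ‖v‖ := by rw [hπ_isom]; ring
  -- Part 1
  have part1 : ∀ v : E, (1 - lam) * ‖v‖ ≤ normS S (coboundary π v) := by
    intro v
    obtain ⟨K, hKc, hKμ⟩ := hμK
    have haesm : AEStronglyMeasurable (fun g => (π g) v) μ := by
      borelize E
      rw [aestronglyMeasurable_iff_aemeasurable_separable]
      refine ⟨((hπ_cont v).measurable).aemeasurable, (fun g => (π g) v) '' K, ?_, ?_⟩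
      · exact (hKc.image (hπ_cont v)).isSeparable
      · have hK' : ∀ᵐ g ∂μ, g ∈ K := by rw [ae_iff]; exact hKμ
        filter_upwards [hK'] with g hg
        exact Set.mem_image_of_mem _ hg
    have hint : Integrable (fun g => (π g) v) μ := by
      refine Integrable.mono' (integrable_const ‖v‖) haesm ?_
      filter_upwards with g
      rw [hπ_isom]
    have hintsub : Integrable (fun g => v - (π g) v) μ := (integrable_const v).sub hint
    have hμS' : ∀ᵐ g ∂μ, g ∈ S := by
      rw [ae_iff]
      exact hμS
    have hub : ∫ g, ‖v - (π g) v‖ ∂μ ≤ normS S (coboundary π v) := by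
      have hmono : ∫ g, ‖v - (π g) v‖ ∂μ ≤ ∫ _g, normS S (coboundary π v) ∂μ := by
        refine integral_mono_ae hintsub.norm (integrable_const _) ?_
        filter_upwards [hμS'] with g hg
        exact le_ciSup (hbd v) ⟨g, hg⟩
      simpa using hmono
    have hkey : v - ∫ g, (π g) v ∂μ = ∫ g, (v - (π g) v) ∂μ := by
      rw [integral_sub (integrable_const v) hint]
      simp
    calc (1 - lam) * ‖v‖ = ‖v‖ - lam * ‖v‖ := by ring
      _ ≤ ‖v‖ - ‖∫ g, (π g) v ∂μ‖ := by linarith [hcontr v]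
      _ ≤ ‖v - ∫ g, (π g) v ∂μ‖ := norm_sub_norm_le _ _
      _ = ‖∫ g, (v - (π g) v) ∂μ‖ := by rw [hkey]
      _ ≤ ∫ g, ‖v - (π g) v‖ ∂μ := norm_integral_le_integral_norm _
      _ ≤ normS S (coboundary π v) := hub
  have hlampos : 0 < 1 - lam := by linarith
  -- Part 2
  have part2 : ∀ v w : E, coboundary π v = coboundary π w → v = w := by
    intro v w heq
    have hcb : coboundary π (v - w) = fun _ => (0 : E) := by
      funext g
      have h1 : coboundary π v g = coboundary π w g := by rw [heq]
      simp only [coboundary, map_sub] at h1 ⊢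
      have h2 : (v - w) - ((π g) v - (π g) w) = (v - (π g) v) - (w - (π g) w) := by abel
      rw [h2, h1, sub_self]
    have h0 : normS S (coboundary π (v - w)) = 0 := by
      rw [hcb]
      simp [normS]
    have h1 := part1 (v - w)
    rw [h0] at h1
    have h2 : ‖v - w‖ ≤ 0 := by nlinarith [norm_nonneg (v - w)]
    have h3 : v - w = 0 := by rwa [← norm_le_zero_iff]
    exact sub_eq_zero.mp h3
  -- injectivity of each π g
  have hinj : ∀ (g : G) (x y : E), (π g) x = (π g) y → x = y := by
    intro g x y h
    have h1 := hπ_isom g (x - y)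
    rw [map_sub, h, sub_self, norm_zero] at h1
    exact sub_eq_zero.mp (norm_eq_zero.mp h1.symm)
  refine ⟨part1, part2, ?_⟩
  intro z hz happrox
  -- choose approximating sequence
  have hchoice : ∀ n : ℕ, ∃ u : E, normS S (z - coboundary π u) < 1 / (n + 1) :=
    fun n => happrox _ (by positivity)
  choose v hv using hchoice
  -- bound for z on S
  obtain ⟨M, hM⟩ := hS_comp.exists_bound_of_continuousOn hz.1.continuousOn
  have hbz : ∀ u : E, BddAbove (Set.range fun s : S => ‖(z - coboundary π u) (s : G)‖) := by
    intro u
    refine ⟨M + 2 * ‖u‖, ?_⟩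
    rintro x ⟨s, rfl⟩
    simp only [Pi.sub_apply]
    calc ‖z (s : G) - coboundary π u (s : G)‖
        ≤ ‖z (s : G)‖ + ‖coboundary π u (s : G)‖ := norm_sub_le _ _
      _ ≤ M + 2 * ‖u‖ := by
          refine add_le_add (hM s s.2) ?_
          calc ‖u - (π (s : G)) u‖ ≤ ‖u‖ + ‖(π (s : G)) u‖ := norm_sub_le _ _
            _ = 2 * ‖u‖ := by rw [hπ_isom]; ring
  have hle : ∀ (u : E) (s : G), s ∈ S →
      ‖z s - coboundary π u s‖ ≤ normS S (z - coboundary π u) := by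
    intro u s hs
    exact le_ciSup (hbz u) ⟨s, hs⟩
  -- Cauchy sequence
  have hcauchy : CauchySeq v := by
    apply cauchySeq_of_le_tendsto_0 (fun N : ℕ => (2 / (1 - lam)) * (1 / (N + 1)))
    · intro n m N hn hm
      rw [dist_eq_norm]
      have h1 : (1 - lam) * ‖v n - v m‖ ≤ normS S (coboundary π (v n - v m)) := part1 _
      have h2 : normS S (coboundary π (v n - v m)) ≤ 1 / (n + 1) + 1 / (m + 1) := by
        apply ciSup_le
        rintro ⟨s, hs⟩
        have e1 : coboundary π (v n - v m) s =
            (coboundary π (v n) s - z s) + (z s - coboundary π (v m) s) := by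
          simp only [coboundary, map_sub]
          abel
        rw [e1]
        calc ‖(coboundary π (v n) s - z s) + (z s - coboundary π (v m) s)‖
            ≤ ‖coboundary π (v n) s - z s‖ + ‖z s - coboundary π (v m) s‖ := norm_add_le _ _
          _ ≤ 1 / (n + 1) + 1 / (m + 1) := by
              refine add_le_add ?_ ?_
              · rw [norm_sub_rev]
                exact (hle (v n) s hs).trans (hv n).le
              · exact (hle (v m) s hs).trans (hv m).le
      have h3 : (1 : ℝ) / (n + 1) ≤ 1 / (N + 1) := by
        apply one_div_le_one_div_of_le (by positivity)
        have : (N : ℝ) ≤ n := Nat.cast_le.2 hn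
        linarith
      have h4 : (1 : ℝ) / (m + 1) ≤ 1 / (N + 1) := by
        apply one_div_le_one_div_of_le (by positivity)
        have : (N : ℝ) ≤ m := Nat.cast_le.2 hm
        linarith
      rw [div_mul_eq_mul_div, le_div_iff₀ hlampos]
      nlinarith
    · have t1 : Filter.Tendsto (fun N : ℕ => (1 : ℝ) / (N + 1)) Filter.atTop (nhds 0) :=
        tendsto_one_div_add_atTop_nhds_zero_nat
      simpa using t1.const_mul (2 / (1 - lam))
  obtain ⟨w, hw⟩ := cauchySeq_tendsto_of_complete hcauchy
  refine ⟨w, ?_⟩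
  -- z = coboundary w on S
  have hwS : ∀ s ∈ S, z s = coboundary π w s := by
    intro s hs
    have hb : ∀ n : ℕ, ‖z s - coboundary π w s‖ ≤ 1 / (n + 1) + 2 * ‖v n - w‖ := by
      intro n
      have htri := dist_triangle (z s) (coboundary π (v n) s) (coboundary π w s)
      simp only [dist_eq_norm] at htri
      refine htri.trans (add_le_add ?_ ?_)
      · exact (hle (v n) s hs).trans (hv n).le
      · have e2 : coboundary π (v n) s - coboundary π w s =
            (v n - w) - (π s) (v n - w) := by
          simp only [coboundary, map_sub]
          abel
        rw [e2]
        calc ‖(v n - w) - (π s) (v n - w)‖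
            ≤ ‖v n - w‖ + ‖(π s) (v n - w)‖ := norm_sub_le _ _
          _ = 2 * ‖v n - w‖ := by rw [hπ_isom]; ring
    have h0 : Filter.Tendsto (fun n : ℕ => 1 / ((n : ℝ) + 1) + 2 * ‖v n - w‖)
        Filter.atTop (nhds 0) := by
      have t1 : Filter.Tendsto (fun N : ℕ => (1 : ℝ) / (N + 1)) Filter.atTop (nhds 0) :=
        tendsto_one_div_add_atTop_nhds_zero_nat
      have t2 : Filter.Tendsto (fun n => ‖v n - w‖) Filter.atTop (nhds 0) :=
        tendsto_iff_norm_sub_tendsto_zero.mp hw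
      have := t1.add ((t2.const_mul (2 : ℝ)))
      simpa using this
    have hle0 : ‖z s - coboundary π w s‖ ≤ 0 := ge_of_tendsto' h0 hb
    exact sub_eq_zero.mp (norm_le_zero_iff.mp hle0)
  -- z 1 = 0
  have hz1 : z 1 = 0 := by
    have h := hz.2 1 1
    rw [hπ_one, one_mul] at h
    simpa using (left_eq_add.mp h)
  -- the set where z agrees with the coboundary is a subgroup
  let T : Subgroup G :=
    { carrier := {g : G | z g = coboundary π w g}
      one_mem' := by
        show z 1 = coboundary π w 1
        simp [coboundary, hπ_one, hz1]
      mul_mem' := by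
        intro a b ha hb
        show z (a * b) = coboundary π w (a * b)
        have ha' : z a = coboundary π w a := ha
        have hb' : z b = coboundary π w b := hb
        rw [hz.2 a b, ha', hb']
        simp only [coboundary, hπ_mul, ContinuousLinearMap.comp_apply, map_sub]
        abel
      inv_mem' := by
        intro a ha
        have ha' : z a = coboundary π w a := ha
        show z a⁻¹ = coboundary π w a⁻¹
        apply hinj a
        have h1 : z (a * a⁻¹) = z a + (π a) (z a⁻¹) := hz.2 a a⁻¹
        rw [mul_inv_cancel, hz1] at h1
        have h2 : (π a) (z a⁻¹) = -(z a) := eq_neg_of_add_eq_zero_right h1.symm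
        have e : (π a) ((π a⁻¹) w) = w := by
          have h := congrArg (fun f : E →L[ℝ] E => f w) (hπ_mul a a⁻¹)
          simp only [mul_inv_cancel, hπ_one, ContinuousLinearMap.id_apply,
            ContinuousLinearMap.comp_apply] at h
          exact h.symm
        have key : (π a) (coboundary π w a⁻¹) = (π a) w - w := by
          simp only [coboundary, map_sub, e]
        rw [h2, key, ha']
        simp only [coboundary]
        abel }
  have hTle : Subgroup.closure S ≤ T := (Subgroup.closure_le T).2 hwS
  have hTtop : ∀ g : G, g ∈ T := by
    intro g
    have : g ∈ Subgroup.closure S := by rw [hS_gen]; trivial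
    exact hTle this
  funext g
  exact hTtop g
end

section
/- Suppose π has no almost invariant vectors with respect to S, i.e. there exists κ > 0 such that sup_{s ∈ S} ‖π_s v − v‖ ≥ κ‖v‖ for every v ∈ E. Then the space of 1-coboundaries B¹(G,π) is a closed subspace of Z¹(G,π) with respect to the norm ‖·‖_S. -/
open MeasureTheory

/-- if `π` has no almost invariant vectors with respect to `S`
(`sup_{s ∈ S} ‖π_s v − v‖ ≥ κ‖v‖` for some `κ > 0`), then `B¹(G,π)` is closed in
`(Z¹(G,π), ‖·‖_S)`. -/
theorem stmt_11 {G E : Type*} [Group G] [TopologicalSpace G] [IsTopologicalGroup G]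
    [NormedAddCommGroup E] [NormedSpace ℝ E] [CompleteSpace E]
    (π : G → E →L[ℝ] E)
    (hπ_mul : ∀ g h : G, π (g * h) = (π g).comp (π h))
    (hπ_one : π 1 = ContinuousLinearMap.id ℝ E)
    (hπ_isom : ∀ (g : G) (v : E), ‖(π g) v‖ = ‖v‖)
    (hπ_cont : ∀ v : E, Continuous fun g => (π g) v)
    (S : Set G) (hS_comp : IsCompact S) (hS_symm : ∀ s ∈ S, s⁻¹ ∈ S)
    (hS_gen : Subgroup.closure S = ⊤)
    (κ : ℝ) (hκ : 0 < κ)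
    (hgap : ∀ v : E, κ * ‖v‖ ≤ ⨆ s : S, ‖(π (s : G)) v - v‖) :
    ∀ z : G → E, IsCocycle π z →
      (∀ ε > (0 : ℝ), ∃ v : E, normS S (z - coboundary π v) < ε) →
      ∃ v : E, z = coboundary π v := by
  intro z hz hap
  obtain ⟨C, hC⟩ := hS_comp.exists_bound_of_continuousOn hz.1.continuousOn
  -- boundedness of the families defining the sup
  have hbdd : ∀ v : E, BddAbove (Set.range fun s : S => ‖(z - coboundary π v) (s : G)‖) := by
    intro v
    refine ⟨C + 2 * ‖v‖, ?_⟩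
    rintro x ⟨s, rfl⟩
    simp only [Pi.sub_apply, coboundary]
    calc ‖z (s : G) - (v - (π (s : G)) v)‖ ≤ ‖z (s : G)‖ + ‖v - (π (s : G)) v‖ :=
          norm_sub_le _ _
      _ ≤ C + 2 * ‖v‖ := by
          have h1 : ‖v - (π (s : G)) v‖ ≤ ‖v‖ + ‖(π (s : G)) v‖ := norm_sub_le _ _
          have h2 := hπ_isom (s : G) v
          have h3 := hC (s : G) s.2
          nlinarith
  have hle : ∀ (v : E) (s : G), s ∈ S →
      ‖z s - (v - (π s) v)‖ ≤ normS S (z - coboundary π v) := by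
    intro v s hs
    have := le_ciSup (hbdd v) (⟨s, hs⟩ : S)
    simpa [normS, coboundary] using this
  -- key spectral-gap inequality
  have hkey : ∀ w : E, κ * ‖w‖ ≤ normS S (coboundary π w) := by
    intro w
    have := hgap w
    simp only [normS, coboundary]
    convert this using 3 with s
    exact norm_sub_rev _ _
  -- pick an approximating sequence
  have hv : ∀ n : ℕ, ∃ v : E, normS S (z - coboundary π v) < 1 / (n + 1) := by
    intro n; exact hap _ (by positivity)
  choose v hvn using hv
  have hnormS_nonneg : ∀ f : G → E, 0 ≤ normS S f := by
    intro f
    exact Real.iSup_nonneg fun s => norm_nonneg _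
  -- Cauchy estimate
  have hbound : ∀ n m : ℕ, ‖v n - v m‖ ≤ κ⁻¹ * (1 / (n + 1) + 1 / (m + 1)) := by
    intro n m
    have h1 : κ * ‖v n - v m‖ ≤ normS S (coboundary π (v n - v m)) := hkey _
    have h2 : normS S (coboundary π (v n - v m)) ≤
        normS S (z - coboundary π (v n)) + normS S (z - coboundary π (v m)) := by
      refine Real.iSup_le (fun s => ?_)
        (add_nonneg (hnormS_nonneg _) (hnormS_nonneg _))
      have heq : coboundary π (v n - v m) (s : G) =
          (z (s : G) - (v m - (π (s : G)) (v m))) - (z (s : G) - (v n - (π (s : G)) (v n))) := by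
        simp only [coboundary, map_sub]
        abel
      rw [heq]
      calc ‖_ - _‖ ≤ ‖z (s : G) - (v m - (π (s : G)) (v m))‖ +
            ‖z (s : G) - (v n - (π (s : G)) (v n))‖ := norm_sub_le _ _
        _ ≤ normS S (z - coboundary π (v m)) + normS S (z - coboundary π (v n)) :=
            add_le_add (hle _ _ s.2) (hle _ _ s.2)
        _ = _ := add_comm _ _
    have h3 : normS S (z - coboundary π (v n)) + normS S (z - coboundary π (v m)) ≤
        1 / (n + 1) + 1 / (m + 1) := add_le_add (hvn n).le (hvn m).le
    have h4 : κ * ‖v n - v m‖ ≤ 1 / (n + 1) + 1 / (m + 1) := le_trans h1 (le_trans h2 h3)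
    rw [inv_mul_eq_div, le_div_iff₀ hκ]
    linarith [h4]
  have hcauchy : CauchySeq v := by
    apply cauchySeq_of_le_tendsto_0 (fun N : ℕ => κ⁻¹ * (2 / (N + 1)))
    · intro n m N hn hm
      rw [dist_eq_norm]
      refine le_trans (hbound n m) ?_
      have h1 : (1 : ℝ) / (n + 1) ≤ 1 / (N + 1) := by
        apply one_div_le_one_div_of_le (by positivity)
        exact_mod_cast by omega
      have h2 : (1 : ℝ) / (m + 1) ≤ 1 / (N + 1) := by
        apply one_div_le_one_div_of_le (by positivity)
        exact_mod_cast by omega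
      have h3 : (2 : ℝ) / (N + 1) = 1 / (N + 1) + 1 / (N + 1) := by ring
      have : (1 : ℝ) / (n + 1) + 1 / (m + 1) ≤ 2 / (N + 1) := by
        rw [h3]; linarith
      exact mul_le_mul_of_nonneg_left this (by positivity)
    · have h0 : Filter.Tendsto (fun N : ℕ => (1 : ℝ) / (N + 1)) Filter.atTop (nhds 0) :=
        tendsto_one_div_add_atTop_nhds_zero_nat
      have heq : (fun N : ℕ => κ⁻¹ * (2 / (N + 1))) =
          fun N : ℕ => κ⁻¹ * 2 * (1 / (N + 1)) := by
        funext N; ring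
      rw [heq]
      simpa using h0.const_mul (κ⁻¹ * 2)
  obtain ⟨w, hw⟩ := cauchySeq_tendsto_of_complete hcauchy
  -- z agrees with the coboundary of w on S
  have hSeq : ∀ s ∈ S, z s = w - (π s) w := by
    intro s hs
    have h1 : Filter.Tendsto (fun n => z s - (v n - (π s) (v n))) Filter.atTop
        (nhds (z s - (w - (π s) w))) := by
      refine Filter.Tendsto.const_sub _ (hw.sub ?_)
      exact ((π s).continuous.tendsto w).comp hw
    have h2 : Filter.Tendsto (fun n => z s - (v n - (π s) (v n))) Filter.atTop (nhds 0) := by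
      rw [tendsto_zero_iff_norm_tendsto_zero]
      apply squeeze_zero (fun n => norm_nonneg _)
        (fun n => le_trans (hle (v n) s hs) (hvn n).le)
      exact tendsto_one_div_add_atTop_nhds_zero_nat
    exact sub_eq_zero.mp (tendsto_nhds_unique h1 h2)
  refine ⟨w, ?_⟩
  have hz1 : z 1 = 0 := by
    have := hz.2 1 1
    rw [hπ_one] at this
    simpa using this.symm
  have hall : ∀ g : G, z g = w - (π g) w := by
    intro g
    have hg : g ∈ Subgroup.closure S := by rw [hS_gen]; exact Subgroup.mem_top g
    induction hg using Subgroup.closure_induction with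
    | mem x hx => exact hSeq x hx
    | one => rw [hz1, hπ_one]; simp
    | mul x y hx hy ihx ihy =>
        rw [hz.2 x y, ihx, ihy, hπ_mul]
        simp only [map_sub, ContinuousLinearMap.comp_apply]
        abel
    | inv x hx ihx =>
        have h0 : z (x⁻¹ * x) = z x⁻¹ + (π x⁻¹) (z x) := hz.2 x⁻¹ x
        rw [inv_mul_cancel, hz1] at h0
        have : z x⁻¹ = -((π x⁻¹) (z x)) := eq_neg_of_add_eq_zero_left h0.symm
        rw [this, ihx, map_sub]
        have hcomp : (π x⁻¹) ((π x) w) = w := by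
          have := hπ_mul x⁻¹ x
          rw [inv_mul_cancel, hπ_one] at this
          calc (π x⁻¹) ((π x) w) = ((π x⁻¹).comp (π x)) w := rfl
            _ = w := by rw [← this]; rfl
        rw [hcomp]
        abel
  funext g
  rw [hall g]; rfl
end

section
/- Suppose ‖A_π^μ v‖ ≤ λ‖v‖ for all v ∈ E with λ < 1, and suppose supp μ ⊆ S. Let P : Z¹(G,π) → Z¹(G,π) be defined by P z = d_π b(z), where b(z) is the unique fixed point of L_{π,z}^μ. Then every 1-cocycle z admits a unique decomposition z = d_π b(z) + (z − d_π b(z)) with d_π b(z) ∈ B¹(G,π) and z − d_π b(z) ∈ ker P, and the quotient map Z¹(G,π) → Z¹(G,π)/B¹(G,π) restricts to a linear isomorphism of ker P onto the reduced cohomology H¹(G,π) = Z¹(G,π)/B¹(G,π). -/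
open MeasureTheory

/-- The space `Z¹(G,π)` of continuous 1-cocycles for `π`, as a submodule of `G → E`. -/
def cocycleSubmodule {G E : Type*} [Group G] [TopologicalSpace G]
    [NormedAddCommGroup E] [NormedSpace ℝ E] (π : G → E →L[ℝ] E) :
    Submodule ℝ (G → E) where
  carrier := {z | Continuous z ∧ ∀ g h : G, z (g * h) = z g + (π g) (z h)}
  add_mem' := by
    rintro z z' ⟨hc, hz⟩ ⟨hc', hz'⟩
    refine ⟨hc.add hc', fun g h => ?_⟩
    simp only [Pi.add_apply, hz g h, hz' g h, map_add]
    abel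
  zero_mem' := ⟨continuous_const, by simp⟩
  smul_mem' := by
    rintro c z ⟨hc, hz⟩
    refine ⟨hc.const_smul c, fun g h => ?_⟩
    simp only [Pi.smul_apply, hz g h, ContinuousLinearMap.map_smul, smul_add]

/-- The codifferential `d_π : E → Z¹(G,π)`, `(d_π v)(g) = v − π_g v`, as a linear map. -/
def codiff {G E : Type*} [Group G] [TopologicalSpace G]
    [NormedAddCommGroup E] [NormedSpace ℝ E] (π : G → E →L[ℝ] E)
    (hπ_mul : ∀ g h : G, π (g * h) = (π g).comp (π h))
    (hπ_cont : ∀ v : E, Continuous fun g => (π g) v) :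
    E →ₗ[ℝ] cocycleSubmodule π where
  toFun v := ⟨fun g => v - (π g) v,
    ⟨continuous_const.sub (hπ_cont v), fun g h => by
      simp only [hπ_mul g h, ContinuousLinearMap.comp_apply, map_sub]
      abel⟩⟩
  map_add' v w := by
    apply Subtype.ext
    funext g
    show (v + w) - (π g) (v + w) = (v - (π g) v) + (w - (π g) w)
    simp only [map_add]
    abel
  map_smul' c v := by
    apply Subtype.ext
    funext g
    show (c • v) - (π g) (c • v) = c • (v - (π g) v)
    simp only [ContinuousLinearMap.map_smul, smul_sub]

/-- with `P z = d_π b(z)`, every cocycle decomposes uniquely as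
`z = d_π b(z) + (z − d_π b(z))` with first summand in `B¹(G,π)` and second in `ker P`;
moreover the quotient map `Z¹(G,π) → Z¹(G,π)/B¹(G,π) = H¹(G,π)` restricts to a linear
isomorphism of `ker P` onto `H¹(G,π)` (`ker P` is a subspace, and the restriction of the
quotient map to it is injective and surjective). -/
theorem stmt_14 {G E : Type*} [Group G] [TopologicalSpace G] [IsTopologicalGroup G]
    [MeasurableSpace G] [BorelSpace G]
    [NormedAddCommGroup E] [NormedSpace ℝ E] [CompleteSpace E]
    (π : G → E →L[ℝ] E)
    (hπ_mul : ∀ g h : G, π (g * h) = (π g).comp (π h))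
    (hπ_one : π 1 = ContinuousLinearMap.id ℝ E)
    (hπ_isom : ∀ (g : G) (v : E), ‖(π g) v‖ = ‖v‖)
    (hπ_cont : ∀ v : E, Continuous fun g => (π g) v)
    (S : Set G) (hS_comp : IsCompact S) (hS_symm : ∀ s ∈ S, s⁻¹ ∈ S)
    (hS_gen : Subgroup.closure S = ⊤)
    (μ : Measure G) [IsProbabilityMeasure μ]
    (hμK : ∃ K : Set G, IsCompact K ∧ μ Kᶜ = 0)
    (hμS : μ Sᶜ = 0)
    (lam : ℝ) (hlam : lam < 1)
    (hcontr : ∀ v : E, ‖∫ g, (π g) v ∂μ‖ ≤ lam * ‖v‖)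
    -- `b z` is the unique fixed point of `L_{π,z}^μ`
    (b : cocycleSubmodule π → E)
    (hb : ∀ z : cocycleSubmodule π,
      b z = (∫ g, (π g) (b z) ∂μ) + ∫ g, (z : G → E) g ∂μ) :
    -- unique decomposition `z = d_π b(z) + (z − d_π b(z))`, coboundary plus element of `ker P`
    (∀ z : cocycleSubmodule π,
      ∃! p : E × cocycleSubmodule π,
        z = codiff π hπ_mul hπ_cont p.1 + p.2 ∧
          codiff π hπ_mul hπ_cont (b p.2) = 0) ∧
    -- `ker P` is a linear subspace of `Z¹(G,π)` ...
    (∀ w w' : cocycleSubmodule π,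
      codiff π hπ_mul hπ_cont (b w) = 0 → codiff π hπ_mul hπ_cont (b w') = 0 →
        codiff π hπ_mul hπ_cont (b (w + w')) = 0) ∧
    (∀ (c : ℝ) (w : cocycleSubmodule π),
      codiff π hπ_mul hπ_cont (b w) = 0 →
        codiff π hπ_mul hπ_cont (b (c • w)) = 0) ∧
    -- ... on which the quotient map onto `H¹(G,π) = Z¹(G,π)/B¹(G,π)` is injective ...
    (∀ w w' : cocycleSubmodule π,
      codiff π hπ_mul hπ_cont (b w) = 0 → codiff π hπ_mul hπ_cont (b w') = 0 →
        Submodule.Quotient.mk (p := LinearMap.range (codiff π hπ_mul hπ_cont)) w =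
          Submodule.Quotient.mk w' → w = w') ∧
    -- ... and surjective
    (∀ z : cocycleSubmodule π,
      ∃ w : cocycleSubmodule π,
        codiff π hπ_mul hπ_cont (b w) = 0 ∧
          Submodule.Quotient.mk (p := LinearMap.range (codiff π hπ_mul hπ_cont)) w =
            Submodule.Quotient.mk z) := by
  classical
  obtain ⟨K, hKc, hKm⟩ := hμK
  have haeK : ∀ᵐ g ∂μ, g ∈ closure K := by
    rw [ae_iff]
    refine measure_mono_null ?_ hKm
    intro g hg
    exact fun h => hg (subset_closure h)
  -- a.e. strong measurability of continuous functions
  have hAESM : ∀ f : G → E, Continuous f → AEStronglyMeasurable f μ := by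
    intro f hf
    have h1 : AEStronglyMeasurable f (μ.restrict (closure K)) :=
      hf.continuousOn.aestronglyMeasurable_of_isCompact hKc.closure
        isClosed_closure.measurableSet
    rwa [Measure.restrict_eq_self_of_ae_mem haeK] at h1
  -- integrability of orbit maps
  have hint : ∀ v : E, Integrable (fun g => (π g) v) μ := by
    intro v
    refine Integrable.mono' (integrable_const ‖v‖) (hAESM _ (hπ_cont v)) ?_
    filter_upwards with g
    rw [hπ_isom]
  -- integrability of cocycles
  have hintz : ∀ z : cocycleSubmodule π, Integrable (fun g => (z : G → E) g) μ := by
    intro z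
    obtain ⟨hzc, hzcoc⟩ := z.2
    obtain ⟨Cb, hCb⟩ := hKc.closure.exists_bound_of_continuousOn hzc.continuousOn
    refine Integrable.mono' (integrable_const Cb) (hAESM _ hzc) ?_
    filter_upwards [haeK] with g hg using hCb g hg
  -- uniqueness of the fixed point
  have hzero : ∀ v : E, v = (∫ g, (π g) v ∂μ) → v = 0 := by
    intro v hv
    have h1 : ‖v‖ ≤ lam * ‖v‖ := by
      calc ‖v‖ = ‖∫ g, (π g) v ∂μ‖ := by rw [← hv]
      _ ≤ lam * ‖v‖ := hcontr v
    have h2 : ‖v‖ ≤ 0 := by nlinarith [norm_nonneg v]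
    exact norm_le_zero_iff.mp h2
  have huniq : ∀ (c v w : E), v = (∫ g, (π g) v ∂μ) + c →
      w = (∫ g, (π g) w ∂μ) + c → v = w := by
    intro c v w hv hw
    have h : v - w = ∫ g, (π g) (v - w) ∂μ := by
      simp only [map_sub]
      rw [integral_sub (hint v) (hint w)]
      calc v - w = ((∫ g, (π g) v ∂μ) + c) - ((∫ g, (π g) w ∂μ) + c) := by
            rw [← hv, ← hw]
      _ = (∫ g, (π g) v ∂μ) - ∫ g, (π g) w ∂μ := by abel
    exact sub_eq_zero.mp (hzero _ h)
  -- injectivity of the codifferential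
  have hker_codiff : ∀ v : E, codiff π hπ_mul hπ_cont v = 0 → v = 0 := by
    intro v hv
    have hv' : ∀ g, v - (π g) v = 0 := fun g => congrFun (congrArg Subtype.val hv) g
    have hconst : (fun g => (π g) v) = fun _ : G => v :=
      funext fun g => (sub_eq_zero.mp (hv' g)).symm
    refine hzero v ?_
    rw [hconst, integral_const]
    simp [measure_univ]
  -- b ∘ codiff = id
  have hbcodiff : ∀ v : E, b (codiff π hπ_mul hπ_cont v) = v := by
    intro v
    have hi : (∫ g, ((codiff π hπ_mul hπ_cont v : cocycleSubmodule π) : G → E) g ∂μ)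
        = v - ∫ g, (π g) v ∂μ := by
      have hc : ((codiff π hπ_mul hπ_cont v : cocycleSubmodule π) : G → E)
          = fun g => v - (π g) v := rfl
      rw [hc, integral_sub (integrable_const v) (hint v), integral_const]
      simp [measure_univ]
    refine huniq (v - ∫ g, (π g) v ∂μ) _ v ?_ ?_
    · rw [← hi]; exact hb _
    · abel
  -- b is additive / subtractive / homogeneous
  have hb_sub : ∀ z z' : cocycleSubmodule π, b (z - z') = b z - b z' := by
    intro z z'
    refine huniq ((∫ g, (z : G → E) g ∂μ) - ∫ g, (z' : G → E) g ∂μ) _ _ ?_ ?_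
    · have h := hb (z - z')
      have hc : (∫ g, ((z - z' : cocycleSubmodule π) : G → E) g ∂μ)
          = (∫ g, (z : G → E) g ∂μ) - ∫ g, (z' : G → E) g ∂μ := by
        have : ((z - z' : cocycleSubmodule π) : G → E)
            = fun g => (z : G → E) g - (z' : G → E) g := rfl
        rw [this, integral_sub (hintz z) (hintz z')]
      rw [hc] at h
      exact h
    · simp only [map_sub]
      rw [integral_sub (hint _) (hint _)]
      conv_lhs => rw [hb z, hb z']
      abel
  have hb_add : ∀ z z' : cocycleSubmodule π, b (z + z') = b z + b z' := by
    intro z z'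
    refine huniq ((∫ g, (z : G → E) g ∂μ) + ∫ g, (z' : G → E) g ∂μ) _ _ ?_ ?_
    · have h := hb (z + z')
      have hc : (∫ g, ((z + z' : cocycleSubmodule π) : G → E) g ∂μ)
          = (∫ g, (z : G → E) g ∂μ) + ∫ g, (z' : G → E) g ∂μ := by
        have : ((z + z' : cocycleSubmodule π) : G → E)
            = fun g => (z : G → E) g + (z' : G → E) g := rfl
        rw [this, integral_add (hintz z) (hintz z')]
      rw [hc] at h
      exact h
    · simp only [map_add]
      rw [integral_add (hint _) (hint _)]
      conv_lhs => rw [hb z, hb z']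
      abel
  have hb_smul : ∀ (c : ℝ) (z : cocycleSubmodule π), b (c • z) = c • b z := by
    intro c z
    refine huniq (c • ∫ g, (z : G → E) g ∂μ) _ _ ?_ ?_
    · have h := hb (c • z)
      have hc : (∫ g, ((c • z : cocycleSubmodule π) : G → E) g ∂μ)
          = c • ∫ g, (z : G → E) g ∂μ := by
        have : ((c • z : cocycleSubmodule π) : G → E)
            = fun g => c • (z : G → E) g := rfl
        rw [this, integral_smul]
      rw [hc] at h
      exact h
    · simp only [_root_.map_smul]
      rw [integral_smul]
      conv_lhs => rw [hb z]
      rw [smul_add]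
  -- b vanishes on the canonical complement
  have hbw : ∀ z : cocycleSubmodule π,
      b (z - codiff π hπ_mul hπ_cont (b z)) = 0 := by
    intro z
    rw [hb_sub, hbcodiff, sub_self]
  refine ⟨?_, ?_, ?_, ?_, ?_⟩
  · -- unique decomposition
    intro z
    refine ⟨(b z, z - codiff π hπ_mul hπ_cont (b z)),
      ⟨(add_sub_cancel _ _).symm, by rw [hbw, map_zero]⟩, ?_⟩
    rintro ⟨p1, p2⟩ ⟨hdec, hker⟩
    have hp2b : b p2 = 0 := hker_codiff _ hker
    have hp2 : p2 = z - codiff π hπ_mul hπ_cont p1 := by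
      rw [hdec, add_sub_cancel_left]
    have hbp2 : b p2 = b z - p1 := by rw [hp2, hb_sub, hbcodiff]
    have hp1 : p1 = b z := by
      rw [hp2b] at hbp2
      exact (sub_eq_zero.mp hbp2.symm).symm
    have hp2' : p2 = z - codiff π hπ_mul hπ_cont (b z) := by rw [hp2, hp1]
    exact Prod.ext_iff.mpr ⟨hp1, hp2'⟩
  · intro w w' h h'
    rw [hb_add, hker_codiff _ h, hker_codiff _ h', add_zero, map_zero]
  · intro c w h
    rw [hb_smul, hker_codiff _ h, smul_zero, map_zero]
  · intro w w' h h' hq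
    have hmem : w - w' ∈ LinearMap.range (codiff π hπ_mul hπ_cont) :=
      (Submodule.Quotient.eq _).mp hq
    obtain ⟨v, hv⟩ := hmem
    have hb0 : b (w - w') = 0 := by
      rw [hb_sub, hker_codiff _ h, hker_codiff _ h', sub_zero]
    have hv0 : v = 0 := by
      have h2 := hbcodiff v
      rw [hv, hb0] at h2
      exact h2.symm
    have : w - w' = 0 := by rw [← hv, hv0, map_zero]
    exact sub_eq_zero.mp this
  · intro z
    refine ⟨z - codiff π hπ_mul hπ_cont (b z), by rw [hbw, map_zero], ?_⟩
    rw [Submodule.Quotient.eq]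
    have he : (z - codiff π hπ_mul hπ_cont (b z)) - z
        = codiff π hπ_mul hπ_cont (-(b z)) := by
      rw [map_neg]; abel
    rw [he]
    exact LinearMap.mem_range_self _ _
end
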